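/- Let S be a vertex-cut of G with |S| = k and S₁ a vertex-cut of G with |S₁| = k - 1. Let F be a semifragment of G to S and F₁ a semifragment of G to S₁, and suppose G⟨S⟩ - V(F) and G⟨S⟩ - V(F̄) are k-connected, where F̄ = G - (S ∪ V(F)). If F ∩ F₁ ≠ ∅, then |S(F,F₁)| ≥ k, where S(F,F₁) = (S₁ ∩ F) ∪ (S₁ ∩ S) ∪ (S ∩ F₁). -/
import Mathlib


open SimpleGraph Set

/-- `KConn G k` means the vertex connectivity of `G` is at least `k`:
removing any set of fewer than `k` vertices leaves at least two vertices
and a connected graph. -/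
def KConn {V : Type*} (G : SimpleGraph V) (k : ℕ) : Prop :=
  ∀ S : Set V, S.ncard < k → 2 ≤ Sᶜ.ncard ∧ (G.induce Sᶜ).Connected

/-- `addClique G S` is `G⟨S⟩`: the graph `G` with all edges among `S` added. -/
def addClique {V : Type*} (G : SimpleGraph V) (S : Set V) : SimpleGraph V :=
  G ⊔ SimpleGraph.fromRel (fun u v => u ∈ S ∧ v ∈ S)

/-- `IsSemifragment G S F`: `F` is a union of at least one but not all
connected components of `G - S`, i.e. `F` is a nonempty subset of `Sᶜ`,
its complement in `Sᶜ` is nonempty, and there are no edges from `F` to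
the rest of `G - S`. -/
def IsSemifragment {V : Type*} (G : SimpleGraph V) (S F : Set V) : Prop :=
  F.Nonempty ∧ (Sᶜ \ F).Nonempty ∧ F ⊆ Sᶜ ∧
    ∀ u ∈ F, ∀ w ∈ Sᶜ \ F, ¬ G.Adj u w

/-- `(G, C) ∈ 𝒦ᵇ_k(t)`: `G` is `k`-connected, `C` is a clique of order `k`,
`G - V(C)` is bipartite with every one of its vertices having degree (in `G`)
at least `k + t`, and adjacent vertices outside `C` have no common neighbor. -/
def KClassB {V : Type*} (G : SimpleGraph V) (C : Set V) (k t : ℕ) : Prop :=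
  KConn G k ∧ C.ncard = k ∧ (∀ u ∈ C, ∀ v ∈ C, u ≠ v → G.Adj u v) ∧
    (G.induce Cᶜ).Colorable 2 ∧ (∀ v ∈ Cᶜ, k + t ≤ (G.neighborSet v).ncard) ∧
    ∀ u ∈ Cᶜ, ∀ v ∈ Cᶜ, G.Adj u v → ∀ w, ¬(G.Adj u w ∧ G.Adj v w)

private lemma walk_mem {V : Type*} {G : SimpleGraph V} {A : Set V}
    (hno : ∀ u ∈ A, ∀ w, w ∉ A → ¬ G.Adj u w) :
    ∀ {a b : V}, G.Walk a b → a ∈ A → b ∈ A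
  | _, _, SimpleGraph.Walk.nil, ha => ha
  | _, _, SimpleGraph.Walk.cons hadj p, ha =>
    walk_mem hno p (by by_contra hc; exact hno _ ha _ hc hadj)


/-- Lemma 2.2(a): with S, S₁ vertex-cuts of sizes k and k-1, F, F₁
semifragments, and G⟨S⟩ - V(F), G⟨S⟩ - V(F̄) both k-connected: if
F ∩ F₁ ≠ ∅ then |S(F,F₁)| ≥ k. -/
theorem stmt8 {V : Type*} [Fintype V] (G : SimpleGraph V) (k : ℕ) (hk : 1 ≤ k)
    (S S₁ F F₁ : Set V) (hS : S.ncard = k) (hS₁ : S₁.ncard = k - 1)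
    (hScut : ¬ (G.induce Sᶜ).Connected) (hS₁cut : ¬ (G.induce S₁ᶜ).Connected)
    (hF : IsSemifragment G S F) (hF₁ : IsSemifragment G S₁ F₁)
    (h1 : KConn ((addClique G S).induce Fᶜ) k)
    (h2 : KConn ((addClique G S).induce (S ∪ F)) k)
    (hint : (F ∩ F₁).Nonempty) :
    k ≤ ((S₁ ∩ F) ∪ (S₁ ∩ S) ∪ (S ∩ F₁)).ncard := by
  set T := (S₁ ∩ F) ∪ (S₁ ∩ S) ∪ (S ∩ F₁) with hT
  by_cases hSsub : S ⊆ T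
  · calc k = S.ncard := hS.symm
      _ ≤ T.ncard := Set.ncard_le_ncard hSsub (Set.toFinite _)
  · by_contra hlt
    push_neg at hlt
    obtain ⟨b0, hb0S, hb0T⟩ := Set.not_subset.mp hSsub
    obtain ⟨a0, ha0F, ha0F₁⟩ := hint
    have ha0S : a0 ∉ S := hF.2.2.1 ha0F
    have ha0S₁ : a0 ∉ S₁ := hF₁.2.2.1 ha0F₁
    have ha0T : a0 ∉ T := by
      simp only [hT, Set.mem_union, Set.mem_inter_iff]
      push_neg
      exact ⟨⟨fun h => absurd h ha0S₁, fun h => absurd h ha0S₁⟩, fun h => absurd h ha0S⟩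
    set X : Set ↥(S ∪ F) := {x | (x : V) ∈ T} with hX
    have hXcard : X.ncard < k := by
      have h1' : X.ncard = (Subtype.val '' X).ncard :=
        (Set.ncard_image_of_injective X Subtype.val_injective).symm
      have h2' : (Subtype.val '' X).ncard ≤ T.ncard := by
        apply Set.ncard_le_ncard _ (Set.toFinite _)
        rintro v ⟨x, hx, rfl⟩
        exact hx
      omega
    obtain ⟨-, hconn⟩ := h2 X hXcard
    set A : Set ↥Xᶜ := {y | ((y : ↥(S ∪ F)) : V) ∈ F ∩ F₁} with hA
    have hno : ∀ u ∈ A, ∀ w, w ∉ A →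
        ¬ (((addClique G S).induce (S ∪ F)).induce Xᶜ).Adj u w := by
      intro u hu w hw hadj
      have hpF : ((u : ↥(S ∪ F)) : V) ∈ F := hu.1
      have hpF₁ : ((u : ↥(S ∪ F)) : V) ∈ F₁ := hu.2
      set p : V := ((u : ↥(S ∪ F)) : V)
      set q : V := ((w : ↥(S ∪ F)) : V)
      have hqW : q ∈ S ∪ F := (w : ↥(S ∪ F)).2
      have hqT : q ∉ T := w.2
      have hqA : q ∉ F ∩ F₁ := hw
      have hpS : p ∉ S := hF.2.2.1 hpF
      -- q ∉ S₁ and q ∉ F₁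
      have hq : q ∉ S₁ ∧ q ∉ F₁ := by
        rcases hqW with hqS | hqF
        · constructor
          · intro h; exact hqT (Or.inl (Or.inr ⟨h, hqS⟩))
          · intro h; exact hqT (Or.inr ⟨hqS, h⟩)
        · constructor
          · intro h; exact hqT (Or.inl (Or.inl ⟨h, hqF⟩))
          · intro h; exact hqA ⟨hqF, h⟩
      have hGadj : (addClique G S).Adj p q := hadj
      rw [addClique] at hGadj
      rcases hGadj with hGadj | hGadj
      · exact hF₁.2.2.2 p hpF₁ q ⟨hq.1, hq.2⟩ hGadj
      · exact hpS (hGadj.2.elim (fun h => h.1) (fun h => h.2))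
    have ha0W : a0 ∈ S ∪ F := Or.inr ha0F
    have hb0W : b0 ∈ S ∪ F := Or.inl hb0S
    set a : ↥Xᶜ := ⟨⟨a0, ha0W⟩, ha0T⟩ with hadef
    set b : ↥Xᶜ := ⟨⟨b0, hb0W⟩, hb0T⟩ with hbdef
    obtain ⟨wk⟩ := hconn.preconnected a b
    have : b ∈ A := walk_mem hno wk ⟨ha0F, ha0F₁⟩
    exact (hF.2.2.1 this.1) hb0S
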